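/- On the elliptic curve E : y^2 = x^3 + 117128 x^2 - 562477703744 x - 319768190447349248 over Q, the point P = (3630968, 6859484192) is a rational point of order exactly 5. -/

import Mathlib

open WeierstrassCurve.Affine

/-- The elliptic curve `E : y² = x³ + 117128x² - 562477703744x - 319768190447349248` over `ℚ`. -/
noncomputable def E : WeierstrassCurve.Affine ℚ :=
  { a₁ := 0, a₂ := 117128, a₃ := 0, a₄ := -562477703744, a₆ := -319768190447349248 }

lemma some_congr {x y x' y' : ℚ} {h : E.Nonsingular x y} {h' : E.Nonsingular x' y'}
    (hx : x = x') (hy : y = y') : Point.some _ _ h = Point.some _ _ h' := by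
  subst hx; subst hy; rfl

lemma hP : E.Nonsingular 3630968 6859484192 := by
  rw [WeierstrassCurve.Affine.nonsingular_iff, WeierstrassCurve.Affine.equation_iff]
  norm_num [E]

lemma hP2 : E.Nonsingular 1054152 623589472 := by
  rw [WeierstrassCurve.Affine.nonsingular_iff, WeierstrassCurve.Affine.equation_iff]
  norm_num [E]

lemma hP4 : E.Nonsingular 3630968 (-6859484192) := by
  rw [WeierstrassCurve.Affine.nonsingular_iff, WeierstrassCurve.Affine.equation_iff]
  norm_num [E]

lemma negY1 : E.negY 3630968 6859484192 = -6859484192 := by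
  norm_num [WeierstrassCurve.Affine.negY, E]

lemma negY2 : E.negY 1054152 623589472 = -623589472 := by
  norm_num [WeierstrassCurve.Affine.negY, E]

lemma slope1 : E.slope 3630968 3630968 6859484192 6859484192 = 2904 := by
  rw [WeierstrassCurve.Affine.slope_of_Y_ne rfl (by rw [negY1]; norm_num)]
  rw [WeierstrassCurve.Affine.negY]
  norm_num [E]

lemma slope2 : E.slope 1054152 1054152 623589472 623589472 = 2420 := by
  rw [WeierstrassCurve.Affine.slope_of_Y_ne rfl (by rw [negY2]; norm_num)]
  rw [WeierstrassCurve.Affine.negY]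
  norm_num [E]

lemma dblP : Point.some _ _ hP + Point.some _ _ hP = Point.some _ _ hP2 := by
  rw [WeierstrassCurve.Affine.Point.add_self_of_Y_ne (by rw [negY1]; norm_num)]
  refine some_congr ?_ ?_
  · rw [WeierstrassCurve.Affine.addX, slope1]
    norm_num [E]
  · rw [WeierstrassCurve.Affine.addY, WeierstrassCurve.Affine.negAddY,
      WeierstrassCurve.Affine.negY, WeierstrassCurve.Affine.addX, slope1]
    norm_num [E]

lemma dblP2 : Point.some _ _ hP2 + Point.some _ _ hP2 = Point.some _ _ hP4 := by
  rw [WeierstrassCurve.Affine.Point.add_self_of_Y_ne (by rw [negY2]; norm_num)]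
  refine some_congr ?_ ?_
  · rw [WeierstrassCurve.Affine.addX, slope2]
    norm_num [E]
  · rw [WeierstrassCurve.Affine.addY, WeierstrassCurve.Affine.negAddY,
      WeierstrassCurve.Affine.negY, WeierstrassCurve.Affine.addX, slope2]
    norm_num [E]

lemma P4addP : Point.some _ _ hP4 + Point.some _ _ hP = 0 :=
  WeierstrassCurve.Affine.Point.add_of_Y_eq rfl (by rw [negY1])

/-- The point `P = (3630968, 6859484192)` is a rational point of order exactly `5` on `E`. -/
theorem P_has_order_five :
    ∃ h : E.Nonsingular 3630968 6859484192, addOrderOf (Point.some _ _ h) = 5 := by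
  refine ⟨hP, ?_⟩
  have h5 : (5 : ℕ) • Point.some _ _ hP = 0 := by
    have : (5 : ℕ) • Point.some _ _ hP =
        ((Point.some _ _ hP + Point.some _ _ hP) + (Point.some _ _ hP + Point.some _ _ hP)) + Point.some _ _ hP := by
      abel
    rw [this, dblP, dblP2, P4addP]
  haveI : Fact (Nat.Prime 5) := ⟨by norm_num⟩
  exact addOrderOf_eq_prime h5 (WeierstrassCurve.Affine.Point.some_ne_zero hP)
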